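/- With the notation of the previous setting (A full row rank, G connected), if q ∈ image H̄' and there exists a generalized sign vector φ of q with H̄'P̄H̄φ = 0, then q = 0. -/

import Mathlib

open Matrix

def IsIncidence {m mb : ℕ} (H : Matrix (Fin m) (Fin mb) ℝ) : Prop :=
  ∀ e, ∃ hd tl : Fin m, hd ≠ tl ∧
    ∀ i, H i e = if i = hd then 1 else if i = tl then -1 else 0

def IncGraph {m mb : ℕ} (H : Matrix (Fin m) (Fin mb) ℝ) : SimpleGraph (Fin m) :=
  SimpleGraph.fromRel fun i j => ∃ e, H i e ≠ 0 ∧ H j e ≠ 0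

def IsOrthProjKer {ni n : ℕ} (Ai : Matrix (Fin ni) (Fin n) ℝ)
    (P : Matrix (Fin n) (Fin n) ℝ) : Prop :=
  Pᵀ = P ∧ P * P = P ∧ ∀ v, P.mulVec v = v ↔ Ai.mulVec v = 0

/-- Generalized sign vector, blockwise version. -/
def IsGenSignB {a n : ℕ} (x q : Fin a → Fin n → ℝ) : Prop :=
  ∀ e k, (0 < x e k → q e k = 1) ∧ (x e k < 0 → q e k = -1) ∧ (x e k = 0 → |q e k| ≤ 1)

lemma aux_mem_range_transpose {ni n : ℕ} (A : Matrix (Fin ni) (Fin n) ℝ) (u : Fin n → ℝ)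
    (h : ∀ v : Fin n → ℝ, A.mulVec v = 0 → u ⬝ᵥ v = 0) : ∃ w, u = Aᵀ.mulVec w := by
  classical
  set T : EuclideanSpace ℝ (Fin ni) →ₗ[ℝ] EuclideanSpace ℝ (Fin n) := Matrix.toEuclideanLin Aᵀ with hT
  have hTapp : ∀ w : Fin ni → ℝ, T (WithLp.toLp 2 w) = WithLp.toLp 2 (Aᵀ.mulVec w) := fun w => rfl
  set W := LinearMap.range T with hW
  have hperp : ∀ x : EuclideanSpace ℝ (Fin n), x ∈ Wᗮ → A.mulVec (WithLp.ofLp x) = 0 := by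
    intro x hx
    funext j
    have := hx (T (WithLp.toLp 2 (Pi.single j 1))) ⟨WithLp.toLp 2 (Pi.single j 1), rfl⟩
    rw [hTapp] at this
    simp only [PiLp.inner_apply, RCLike.inner_apply, starRingEnd_apply, star_trivial] at this
    have h2 : ∑ i, x i * Aᵀ.mulVec (Pi.single j 1) i = A.mulVec (WithLp.ofLp x) j := by
      simp [Matrix.mulVec, dotProduct, Matrix.transpose_apply, Pi.single_apply, mul_comm]
    rw [h2] at this
    simpa using this
  have hmem : (WithLp.toLp 2 u : EuclideanSpace ℝ (Fin n)) ∈ Wᗮᗮ := by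
    intro x hx
    have hx0 := hperp x hx
    have := h _ hx0
    simp only [PiLp.inner_apply, RCLike.inner_apply, starRingEnd_apply, star_trivial]
    simpa [dotProduct, mul_comm] using this
  rw [Submodule.orthogonal_orthogonal] at hmem
  obtain ⟨w, hw⟩ := hmem
  refine ⟨WithLp.ofLp w, ?_⟩
  have := congrArg WithLp.ofLp hw
  rw [← WithLp.toLp_ofLp (p := 2) w, hTapp] at this
  exact this.symm

/-- In the setting of connected `G` and full row rank `A`: if `q ∈ image H̄'`
(blockwise `q e = ∑ i, H i e • y i`) and some generalized sign vector `φ` of `q`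
satisfies `H̄'P̄H̄ φ = 0`, then `q = 0`. -/
theorem stmt_5 {m mb n : ℕ} (ni : Fin m → ℕ)
    (A : ∀ i, Matrix (Fin (ni i)) (Fin n) ℝ)
    (hA : LinearIndependent ℝ (fun p : Σ i, Fin (ni i) => A p.1 p.2))
    (P : Fin m → Matrix (Fin n) (Fin n) ℝ)
    (hP : ∀ i, IsOrthProjKer (A i) (P i))
    (H : Matrix (Fin m) (Fin mb) ℝ) (hH : IsIncidence H)
    (hconn : (IncGraph H).Connected)
    (q : Fin mb → Fin n → ℝ)
    (hq : ∃ y : Fin m → Fin n → ℝ, ∀ e, q e = ∑ i, H i e • y i)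
    (φ : Fin mb → Fin n → ℝ) (hφ : IsGenSignB q φ)
    (hMφ : ∀ e, ∑ i, H i e • (P i).mulVec (∑ e', H i e' • φ e') = 0) :
    q = 0 := by
  classical
  obtain ⟨y, hy⟩ := hq
  set z : Fin m → Fin n → ℝ := fun i => ∑ e, H i e • φ e with hz
  -- column sums of H vanish
  have hcol : ∀ e, ∑ i, H i e = 0 := by
    intro e
    obtain ⟨hd, tl, hne, hval⟩ := hH e
    have key : ∀ i : Fin m, H i e
        = (Pi.single hd (1:ℝ) : Fin m → ℝ) i + (Pi.single tl (-1:ℝ) : Fin m → ℝ) i := by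
      intro i
      rw [hval i]
      rcases eq_or_ne i hd with h | h <;> rcases eq_or_ne i tl with h2 | h2 <;>
        simp_all [Pi.single_apply]
    rw [Finset.sum_congr rfl fun i _ => key i, Finset.sum_add_distrib]
    simp
  -- symmetric idempotent consequences
  have hsym : ∀ i (v : Fin n → ℝ), v ᵥ* (P i) = (P i).mulVec v := by
    intro i v
    conv_lhs => rw [← (hP i).1]
    rw [Matrix.vecMul_transpose]
  -- step 1 : ∑ i, Pz i ⬝ᵥ Pz i = 0, hence P i *ᵥ z i = 0
  have hPz : ∀ i, (P i).mulVec (z i) = 0 := by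
    have h0 : ∑ e, φ e ⬝ᵥ (∑ i, H i e • (P i).mulVec (z i)) = 0 := by
      apply Finset.sum_eq_zero
      intro e _
      rw [hMφ e, dotProduct_zero]
    have hds : ∀ (v : Fin n → ℝ) (g : Fin m → Fin n → ℝ),
        v ⬝ᵥ (∑ i, g i) = ∑ i, v ⬝ᵥ g i := by
      intro v g
      simp only [dotProduct, Finset.sum_apply, Finset.mul_sum]
      exact Finset.sum_comm
    have hsd : ∀ (g : Fin mb → Fin n → ℝ) (w : Fin n → ℝ),
        (∑ e, g e) ⬝ᵥ w = ∑ e, g e ⬝ᵥ w := by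
      intro g w
      simp only [dotProduct, Finset.sum_apply, Finset.sum_mul]
      exact Finset.sum_comm
    have h1 : ∑ e, φ e ⬝ᵥ (∑ i, H i e • (P i).mulVec (z i))
        = ∑ i, z i ⬝ᵥ (P i).mulVec (z i) := by
      rw [Finset.sum_congr rfl fun e _ => hds (φ e) (fun i => H i e • (P i).mulVec (z i))]
      rw [Finset.sum_comm]
      apply Finset.sum_congr rfl
      intro i _
      rw [hz]
      rw [hsd]
      apply Finset.sum_congr rfl
      intro e _
      rw [smul_dotProduct, dotProduct_smul]
    have h2 : ∀ i, z i ⬝ᵥ (P i).mulVec (z i)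
        = (P i).mulVec (z i) ⬝ᵥ (P i).mulVec (z i) := by
      intro i
      have ha : z i ⬝ᵥ (P i).mulVec (z i) = ((P i).mulVec (z i)) ⬝ᵥ z i := by
        rw [dotProduct_mulVec, hsym]
      have hb : (P i).mulVec (z i) ⬝ᵥ (P i).mulVec (z i)
          = ((P i).mulVec (z i)) ⬝ᵥ z i := by
        rw [dotProduct_mulVec, hsym, Matrix.mulVec_mulVec, (hP i).2.1]
      rw [ha, hb]
    rw [h1] at h0
    rw [Finset.sum_congr rfl fun i _ => h2 i] at h0
    intro i
    have := (Finset.sum_eq_zero_iff_of_nonneg (fun j _ => by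
      simp only [dotProduct]
      exact Finset.sum_nonneg fun k _ => mul_self_nonneg _)).mp h0 i (Finset.mem_univ i)
    exact dotProduct_self_eq_zero.mp this
  -- step 2 : z i ∈ range (A i)ᵀ
  have hrange : ∀ i, ∃ w, z i = (A i)ᵀ.mulVec w := by
    intro i
    apply aux_mem_range_transpose
    intro v hv
    have hfix : (P i).mulVec v = v := ((hP i).2.2 v).mpr hv
    calc z i ⬝ᵥ v = z i ⬝ᵥ (P i).mulVec v := by rw [hfix]
      _ = (z i ᵥ* P i) ⬝ᵥ v := dotProduct_mulVec _ _ _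
      _ = ((P i).mulVec (z i)) ⬝ᵥ v := by rw [hsym]
      _ = 0 := by rw [hPz i, zero_dotProduct]
  -- step 3 : ∑ i, z i = 0
  have hsumz : ∑ i, z i = 0 := by
    rw [hz]
    rw [Finset.sum_comm]
    apply Finset.sum_eq_zero
    intro e _
    rw [← Finset.sum_smul, hcol e, zero_smul]
  -- step 4 : z = 0 via linear independence
  have hz0 : ∀ i, z i = 0 := by
    choose w hw using hrange
    have hg : ∑ p : Σ i, Fin (ni i), w p.1 p.2 • A p.1 p.2 = 0 := by
      rw [← Finset.univ_sigma_univ, Finset.sum_sigma]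
      calc ∑ i, ∑ j, w i j • A i j = ∑ i, z i := by
            apply Finset.sum_congr rfl
            intro i _
            rw [hw i]
            funext k
            simp [Matrix.mulVec, dotProduct, Matrix.transpose_apply, mul_comm]
        _ = 0 := hsumz
    have := Fintype.linearIndependent_iff.mp hA (fun p => w p.1 p.2) hg
    intro i
    rw [hw i]
    have hwz : w i = 0 := funext fun j => this ⟨i, j⟩
    rw [hwz, Matrix.mulVec_zero]
  -- step 5 : ∑ e ∑ k, φ e k * q e k = 0
  have habs : ∀ e k, φ e k * q e k = |q e k| := by
    intro e k
    obtain ⟨hp, hn, h0⟩ := hφ e k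
    rcases lt_trichotomy (q e k) 0 with h | h | h
    · rw [hn h, abs_of_neg h]; ring
    · rw [h, mul_zero, abs_zero]
    · rw [hp h, abs_of_pos h, one_mul]
  have hsum0 : ∑ e, ∑ k, φ e k * q e k = 0 := by
    have : ∀ e k, q e k = ∑ i, H i e * y i k := by
      intro e k
      rw [hy e]
      simp
    calc ∑ e, ∑ k, φ e k * q e k
        = ∑ e, ∑ k, ∑ i, H i e * (φ e k * y i k) := by
          apply Finset.sum_congr rfl; intro e _
          apply Finset.sum_congr rfl; intro k _
          rw [this e k, Finset.mul_sum]
          apply Finset.sum_congr rfl; intro i _; ring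
      _ = ∑ e, ∑ i, ∑ k, H i e * (φ e k * y i k) := by
          exact Finset.sum_congr rfl fun e _ => Finset.sum_comm
      _ = ∑ i, ∑ e, ∑ k, H i e * (φ e k * y i k) := Finset.sum_comm
      _ = ∑ i, ∑ k, ∑ e, H i e * (φ e k * y i k) := by
          exact Finset.sum_congr rfl fun i _ => Finset.sum_comm
      _ = ∑ i, ∑ k, (∑ e, H i e * φ e k) * y i k := by
          apply Finset.sum_congr rfl; intro i _
          apply Finset.sum_congr rfl; intro k _
          rw [Finset.sum_mul]
          apply Finset.sum_congr rfl; intro e _; ring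
      _ = ∑ i, ∑ k, z i k * y i k := by
          apply Finset.sum_congr rfl; intro i _
          apply Finset.sum_congr rfl; intro k _
          congr 1
          rw [hz]
          simp
      _ = 0 := by
          apply Finset.sum_eq_zero; intro i _
          apply Finset.sum_eq_zero; intro k _
          rw [hz0 i]
          simp
  -- conclude
  rw [Finset.sum_congr rfl fun e _ => Finset.sum_congr rfl fun k _ => habs e k] at hsum0
  funext e k
  have h1 := (Finset.sum_eq_zero_iff_of_nonneg (fun e _ =>
      Finset.sum_nonneg fun k _ => abs_nonneg _)).mp hsum0 e (Finset.mem_univ e)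
  have h2 := (Finset.sum_eq_zero_iff_of_nonneg (fun k _ => abs_nonneg _)).mp h1 k
      (Finset.mem_univ k)
  simpa using abs_eq_zero.mp h2
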